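/- Let N ≥ 1 be an integer, k' a real number, and ε₀ ∈ (0, e^{−1}]. Then there exists a constant C > 0 such that for every a ∈ (0, ε₀]: (i) if k' ≠ −1, then ∫_{{x ∈ ℝ^N : a ≤ |x| ≤ ε₀}} |x|^{−N}·(log(1/|x|))^{k'} dx ≤ C·(log(1/a))^{max(0, k'+1)}; (ii) if k' = −1, then ∫_{{x ∈ ℝ^N : a ≤ |x| ≤ ε₀}} |x|^{−N}·(log(1/|x|))^{−1} dx ≤ C·(1 + log(log(1/a))). -/

import Mathlib

open MeasureTheory


lemma cont_aux (a b : ℝ) (ha : 0 < a) (hb : b < 1) (p : ℝ) :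
    ContinuousOn (fun y : ℝ => Real.log (1/y) ^ p / y) (Set.Icc a b) := by
  have hne : ∀ z ∈ Set.Icc a b, z ≠ 0 := fun z hz => (lt_of_lt_of_le ha hz.1).ne'
  have h1 : ContinuousOn (fun y : ℝ => 1/y) (Set.Icc a b) :=
    continuousOn_const.div continuousOn_id hne
  have h2 : ContinuousOn (fun y : ℝ => Real.log (1/y)) (Set.Icc a b) :=
    h1.log (fun z hz => by
      have := lt_of_lt_of_le ha hz.1
      positivity)
  have h3 : ContinuousOn (fun y : ℝ => Real.log (1/y) ^ p) (Set.Icc a b) := by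
    apply h2.rpow_const
    intro z hz
    left
    have hz0 : 0 < z := lt_of_lt_of_le ha hz.1
    have : 1 < 1/z := one_lt_one_div hz0 (lt_of_le_of_lt hz.2 hb)
    exact (Real.log_pos this).ne'
  exact h3.div continuousOn_id hne

lemma haslog (y : ℝ) (hy0 : 0 < y) (hy1 : y < 1) :
    HasDerivAt (fun y : ℝ => Real.log (1/y)) (-(1/y)) y := by
  have h1 : HasDerivAt (fun y : ℝ => 1/y) (-(y^2)⁻¹) y := by
    simpa [one_div] using hasDerivAt_inv hy0.ne'
  have h2 := h1.log (by positivity)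
  convert h2 using 1
  field_simp

lemma ftc1 (k' a b : ℝ) (hk : k' + 1 ≠ 0) (ha : 0 < a) (hab : a ≤ b) (hb : b ≤ Real.exp (-1)) :
    ∫ y in a..b, Real.log (1/y) ^ k' / y
      = (Real.log (1/a) ^ (k'+1) - Real.log (1/b) ^ (k'+1)) / (k'+1) := by
  have hb1 : b < 1 := lt_of_le_of_lt hb (by
    rw [← Real.exp_zero]; exact Real.exp_lt_exp.2 (by norm_num))
  have key : ∀ y ∈ Set.uIcc a b, HasDerivAt
      (fun y : ℝ => -(Real.log (1/y) ^ (k'+1)) / (k'+1)) (Real.log (1/y) ^ k' / y) y := by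
    intro y hy
    rw [Set.uIcc_of_le hab] at hy
    have hy0 : 0 < y := lt_of_lt_of_le ha hy.1
    have hy1 : y < 1 := lt_of_le_of_lt hy.2 hb1
    have hlogpos : 0 < Real.log (1/y) := Real.log_pos (one_lt_one_div hy0 hy1)
    have h3 := ((haslog y hy0 hy1).rpow_const (p := k'+1) (Or.inl hlogpos.ne')).neg.div_const (k'+1)
    convert h3 using 1
    any_goals rfl
    rw [add_sub_cancel_right]
    field_simp
  rw [intervalIntegral.integral_eq_sub_of_hasDerivAt key
    (((cont_aux a b ha hb1 k').mono (by rw [Set.uIcc_of_le hab])).intervalIntegrable)]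
  field_simp
  ring

lemma ftc2 (a b : ℝ) (ha : 0 < a) (hab : a ≤ b) (hb : b ≤ Real.exp (-1)) :
    ∫ y in a..b, Real.log (1/y) ^ (-1 : ℝ) / y
      = Real.log (Real.log (1/a)) - Real.log (Real.log (1/b)) := by
  have hb1 : b < 1 := lt_of_le_of_lt hb (by
    rw [← Real.exp_zero]; exact Real.exp_lt_exp.2 (by norm_num))
  have key : ∀ y ∈ Set.uIcc a b, HasDerivAt
      (fun y : ℝ => -Real.log (Real.log (1/y))) (Real.log (1/y) ^ (-1 : ℝ) / y) y := by
    intro y hy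
    rw [Set.uIcc_of_le hab] at hy
    have hy0 : 0 < y := lt_of_lt_of_le ha hy.1
    have hy1 : y < 1 := lt_of_le_of_lt hy.2 hb1
    have hlogpos : 0 < Real.log (1/y) := Real.log_pos (one_lt_one_div hy0 hy1)
    have h3 := ((haslog y hy0 hy1).log hlogpos.ne').neg
    convert h3 using 1
    any_goals rfl
    rw [Real.rpow_neg_one]
    field_simp
  rw [intervalIntegral.integral_eq_sub_of_hasDerivAt key
    (((cont_aux a b ha hb1 (-1)).mono (by rw [Set.uIcc_of_le hab])).intervalIntegrable)]
  ring

lemma polar (N : ℕ) (hN : 1 ≤ N) (a ε₀ : ℝ) (ha : 0 < a) (haε : a ≤ ε₀)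
    (hε : ε₀ ≤ Real.exp (-1)) (k' : ℝ) :
    ∫⁻ x in {x : EuclideanSpace ℝ (Fin N) | a ≤ ‖x‖ ∧ ‖x‖ ≤ ε₀},
        ENNReal.ofReal (‖x‖ ^ (-(N : ℝ)) * Real.log (1 / ‖x‖) ^ k')
      = ENNReal.ofReal ((N : ℝ) *
          (volume (Metric.ball (0 : EuclideanSpace ℝ (Fin N)) 1)).toReal *
          ∫ y in a..ε₀, Real.log (1/y) ^ k' / y) := by
  set E := EuclideanSpace ℝ (Fin N)
  haveI : Nontrivial E := Module.nontrivial_of_finrank_pos (R := ℝ)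
    (by rw [finrank_euclideanSpace_fin]; omega)
  have hε1 : ε₀ < 1 := lt_of_le_of_lt hε (by
    rw [← Real.exp_zero]; exact Real.exp_lt_exp.2 (by norm_num))
  set h : ℝ → ℝ := fun r => r ^ (-(N : ℝ)) * Real.log (1/r) ^ k' with hh
  set S : Set E := {x : E | a ≤ ‖x‖ ∧ ‖x‖ ≤ ε₀} with hSdef
  have hSpre : S = (fun x : E => ‖x‖) ⁻¹' (Set.Icc a ε₀) := by
    ext x; simp [hSdef, Set.mem_Icc]
  have hS : MeasurableSet S := by
    rw [hSpre]; exact measurable_norm measurableSet_Icc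
  -- continuity of h on Icc a ε₀
  have hcont : ContinuousOn h (Set.Icc a ε₀) := by
    have hne : ∀ z ∈ Set.Icc a ε₀, z ≠ 0 := fun z hz => (lt_of_lt_of_le ha hz.1).ne'
    have h1 : ContinuousOn (fun y : ℝ => y ^ (-(N:ℝ))) (Set.Icc a ε₀) :=
      continuousOn_id.rpow_const (fun z hz => Or.inl (hne z hz))
    have h2 : ContinuousOn (fun y : ℝ => Real.log (1/y) ^ k') (Set.Icc a ε₀) := by
      refine ((continuousOn_const.div continuousOn_id hne).log (fun z hz => ?_)).rpow_const
        (fun z hz => Or.inl ?_)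
      · show (1:ℝ)/z ≠ 0
        have := lt_of_lt_of_le ha hz.1; positivity
      · have hz0 : 0 < z := lt_of_lt_of_le ha hz.1
        exact (Real.log_pos (one_lt_one_div hz0 (lt_of_le_of_lt hz.2 hε1))).ne'
    exact h1.mul h2
  -- integrability on S
  have hScompact : IsCompact S := by
    apply Metric.isCompact_of_isClosed_isBounded
    · rw [hSpre]; exact IsClosed.preimage continuous_norm isClosed_Icc
    · apply Bornology.IsBounded.subset (Metric.isBounded_closedBall (x := (0:E)) (r := ε₀))
      intro x hx
      simpa [Metric.mem_closedBall] using hx.2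
  have hint : IntegrableOn (fun x : E => h ‖x‖) S volume := by
    apply ContinuousOn.integrableOn_compact hScompact
    exact hcont.comp continuous_norm.continuousOn (by rw [hSpre]; exact fun x hx => hx)
  -- nonnegativity on S
  have hnn : 0 ≤ᵐ[volume.restrict S] (fun x : E => h ‖x‖) := by
    refine ae_restrict_of_forall_mem hS (fun x hx => ?_)
    have h1 : (0:ℝ) ≤ ‖x‖ ^ (-(N:ℝ)) := Real.rpow_nonneg (norm_nonneg x) _
    have hx0 : 0 < ‖x‖ := lt_of_lt_of_le ha hx.1
    have h2 : (0:ℝ) ≤ Real.log (1/‖x‖) ^ k' :=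
      Real.rpow_nonneg (Real.log_nonneg (one_le_one_div hx0 (le_trans hx.2 hε1.le))) _
    exact mul_nonneg h1 h2
  rw [← ofReal_integral_eq_lintegral_ofReal hint hnn]
  congr 1
  -- switch to whole-space integral of indicator
  have e1 : ∫ x in S, h ‖x‖ = ∫ x : E, (Set.Icc a ε₀).indicator h ‖x‖ := by
    rw [← integral_indicator hS]
    refine integral_congr_ae (Filter.Eventually.of_forall fun x => ?_)
    rw [hSpre]
    exact (Set.indicator_comp_right (fun x : E => ‖x‖) (g := h)).symm ▸ rfl
  rw [e1, integral_fun_norm_addHaar volume ((Set.Icc a ε₀).indicator h)]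
  rw [finrank_euclideanSpace_fin]
  rw [nsmul_eq_mul, smul_eq_mul, mul_assoc]
  congr 1
  congr 1
  -- the radial integral
  have e2 : ∀ y : ℝ, y ^ (N - 1) • (Set.Icc a ε₀).indicator h y
      = (Set.Icc a ε₀).indicator (fun y => Real.log (1/y) ^ k' / y) y := by
    intro y
    rw [smul_eq_mul]
    by_cases hy : y ∈ Set.Icc a ε₀
    · rw [Set.indicator_of_mem hy, Set.indicator_of_mem hy]
      have hy0 : 0 < y := lt_of_lt_of_le ha hy.1
      have : (y:ℝ) ^ (N-1) = y ^ (((N-1:ℕ)):ℝ) := (Real.rpow_natCast y (N-1)).symm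
      rw [hh, this, ← mul_assoc, ← Real.rpow_add hy0]
      have : ((N-1:ℕ):ℝ) + (-(N:ℝ)) = -1 := by
        have : ((N-1:ℕ):ℝ) = (N:ℝ) - 1 := by
          rw [Nat.cast_sub hN]; norm_num
        rw [this]; ring
      rw [this, Real.rpow_neg_one]
      field_simp
    · rw [Set.indicator_of_notMem hy, Set.indicator_of_notMem hy, mul_zero]
  rw [MeasureTheory.integral_congr_ae (Filter.Eventually.of_forall e2)]
  rw [setIntegral_indicator measurableSet_Icc]
  have : Set.Ioi (0:ℝ) ∩ Set.Icc a ε₀ = Set.Icc a ε₀ := by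
    apply Set.inter_eq_self_of_subset_right
    exact fun y hy => lt_of_lt_of_le ha hy.1
  rw [this, MeasureTheory.integral_Icc_eq_integral_Ioc, ← intervalIntegral.integral_of_le haε]


/-- Critical case `2k = N` of the fundamental integral lemma: annulus integrals of
`|x|^(-N) (log(1/|x|))^(k')` are bounded by `C (log(1/a))^(max 0 (k'+1))` if `k' ≠ -1`,
and by `C (1 + log log(1/a))` if `k' = -1`. -/
theorem stmt9 (N : ℕ) (hN : 1 ≤ N) (k' : ℝ) (ε₀ : ℝ)
    (hε₀ : ε₀ ∈ Set.Ioc (0 : ℝ) (Real.exp (-1))) :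
    ∃ C > (0 : ℝ), ∀ a ∈ Set.Ioc (0 : ℝ) ε₀,
      (k' ≠ -1 →
        ∫⁻ x in {x : EuclideanSpace ℝ (Fin N) | a ≤ ‖x‖ ∧ ‖x‖ ≤ ε₀},
            ENNReal.ofReal (‖x‖ ^ (-(N : ℝ)) * Real.log (1 / ‖x‖) ^ k')
          ≤ ENNReal.ofReal (C * Real.log (1 / a) ^ max 0 (k' + 1))) ∧
      (k' = -1 →
        ∫⁻ x in {x : EuclideanSpace ℝ (Fin N) | a ≤ ‖x‖ ∧ ‖x‖ ≤ ε₀},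
            ENNReal.ofReal (‖x‖ ^ (-(N : ℝ)) * Real.log (1 / ‖x‖) ^ k')
          ≤ ENNReal.ofReal (C * (1 + Real.log (Real.log (1 / a))))) := by
  obtain ⟨hε0, hεe⟩ := hε₀
  set E := EuclideanSpace ℝ (Fin N)
  set b : ℝ := (volume (Metric.ball (0 : E) 1)).toReal with hbdef
  have hb : 0 < b := by
    apply ENNReal.toReal_pos
    · exact (Metric.measure_ball_pos volume 0 one_pos).ne'
    · exact measure_ball_lt_top.ne
  set c : ℝ := (N : ℝ) * b with hcdef
  have hc : 0 < c := by
    have : (0:ℝ) < N := by exact_mod_cast hN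
    positivity
  set Lε : ℝ := Real.log (1/ε₀) with hLεdef
  have hLε : 1 ≤ Lε := by
    rw [hLεdef, one_div, Real.log_inv]
    have := Real.log_le_log hε0 hεe
    rw [Real.log_exp] at this
    linarith
  set C : ℝ := if k' = -1 then c + 1
      else c / |k'+1| * (1 + Lε ^ (k'+1)) + 1 with hCdef
  have hLεp : ∀ p : ℝ, 0 ≤ Lε ^ p := fun p => Real.rpow_nonneg (by linarith) p
  have hC : 0 < C := by
    rw [hCdef]
    split
    · linarith
    · have h1 : 0 ≤ c / |k'+1| := le_of_lt (by
        apply div_pos hc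
        rw [abs_pos]
        intro h; rename_i hne; exact hne (by linarith))
      nlinarith [hLεp (k'+1)]
  refine ⟨C, hC, fun a ha => ?_⟩
  obtain ⟨ha0, haε⟩ := ha
  set La : ℝ := Real.log (1/a) with hLadef
  have hLa : Lε ≤ La := by
    rw [hLadef, hLεdef, one_div, one_div, Real.log_inv, Real.log_inv]
    have := Real.log_le_log ha0 haε
    linarith
  have hLa1 : 1 ≤ La := le_trans hLε hLa
  have hLap : ∀ p : ℝ, 0 ≤ La ^ p := fun p => Real.rpow_nonneg (by linarith) p
  constructor
  · intro hk
    have hp : k' + 1 ≠ 0 := fun h => hk (by linarith)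
    rw [polar N hN a ε₀ ha0 haε hεe k', ftc1 k' a ε₀ hp ha0 haε hεe]
    apply ENNReal.ofReal_le_ofReal
    show c * ((La ^ (k'+1) - Lε ^ (k'+1)) / (k'+1)) ≤ C * La ^ max 0 (k'+1)
    rw [hCdef, if_neg hk]
    rcases lt_or_gt_of_ne hp with hneg | hpos
    · -- k'+1 < 0
      have hmax : max 0 (k'+1) = 0 := max_eq_left (by linarith)
      rw [hmax, Real.rpow_zero, abs_of_neg hneg]
      have hanti : La ^ (k'+1) ≤ Lε ^ (k'+1) :=
        Real.rpow_le_rpow_of_nonpos (by linarith) hLa hneg.le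
      have hq : (0:ℝ) < (-(k'+1))⁻¹ := inv_pos.2 (by linarith)
      have e1 : (La ^ (k'+1) - Lε ^ (k'+1)) / (k'+1)
          = (Lε ^ (k'+1) - La ^ (k'+1)) * (-(k'+1))⁻¹ := by
        rw [div_eq_mul_inv, inv_neg]
        ring
      have e2 : c / -(k'+1) = c * (-(k'+1))⁻¹ := div_eq_mul_inv c _
      rw [e1, e2]
      nlinarith [mul_nonneg (mul_nonneg hc.le hq.le) (hLap (k'+1)),
        mul_nonneg (mul_nonneg hc.le hq.le) (hLεp (k'+1))]
    · -- k'+1 > 0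
      have hmax : max 0 (k'+1) = k' + 1 := max_eq_right hpos.le
      rw [hmax, abs_of_pos hpos]
      have hq : (0:ℝ) < (k'+1)⁻¹ := inv_pos.2 hpos
      have e1 : (La ^ (k'+1) - Lε ^ (k'+1)) / (k'+1)
          = (La ^ (k'+1) - Lε ^ (k'+1)) * (k'+1)⁻¹ := div_eq_mul_inv _ _
      have e2 : c / (k'+1) = c * (k'+1)⁻¹ := div_eq_mul_inv c _
      rw [e1, e2]
      nlinarith [mul_nonneg (mul_nonneg (mul_nonneg hc.le hq.le) (hLεp (k'+1))) (hLap (k'+1)),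
        mul_nonneg (mul_nonneg hc.le hq.le) (hLεp (k'+1)), hLap (k'+1)]
  · intro hk
    subst hk
    rw [polar N hN a ε₀ ha0 haε hεe (-1), ftc2 a ε₀ ha0 haε hεe]
    apply ENNReal.ofReal_le_ofReal
    show c * (Real.log La - Real.log Lε) ≤ C * (1 + Real.log La)
    rw [hCdef, if_pos rfl]
    have h1 : 0 ≤ Real.log Lε := Real.log_nonneg hLε
    have h2 : 0 ≤ Real.log La := Real.log_nonneg hLa1
    nlinarith
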